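/- arXiv:2012.05039 — 7 statements merged into one kernel-verified Lean document; each statement's English description precedes it below -/
import Mathlib

section
/- Let r ≥ 1 and let the signed permutation group act on ℝ^r (maps Fin r → ℝ) as follows: a permutation σ of {1,…,r} acts by (σ·x)_i = x_{σ⁻¹(i)}, and for each index j the sign change s_j acts by (s_j·x)_i = x_i for i ≠ j and (s_j·x)_j = −x_j. Let U ⊆ ℝ^r be a set invariant under all coordinate permutations and all sign changes, and let Φ = (h_1,…,h_r) : U → ℝ^r. Then Φ is equivariant for every coordinate permutation and every sign change (i.e. Φ(σ·x) = σ·Φ(x) and Φ(s_j·x) = s_j·Φ(x) for all σ, j, x ∈ U) if and only if there exists a single function h : U → ℝ such that: (i) h_i(x) = h(p_{1i}(x)) for every i, where p_{1i} is the transposition of coordinates 1 and i; (ii) h(s_1·x) = −h(x) for all x ∈ U (h is odd in the first variable); (iii) h(s_i·x) = h(x) for every i > 1 and all x ∈ U, and h(p_{ij}(x)) = h(x) for all i, j > 1 and all x ∈ U. -/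
/-- Permutation action on `ℝ^r`: `(σ · x) i = x (σ⁻¹ i)`. -/
def permAct {r : ℕ} (σ : Equiv.Perm (Fin r)) (x : Fin r → ℝ) : Fin r → ℝ :=
  fun i => x (σ⁻¹ i)

/-- Sign change in the `j`-th coordinate: `(s_j · x) i = x i` for `i ≠ j`,
`(s_j · x) j = -x j`. -/
def signAct {r : ℕ} (j : Fin r) (x : Fin r → ℝ) : Fin r → ℝ :=
  fun i => if i = j then -x i else x i


lemma permAct_mul {r : ℕ} (σ τ : Equiv.Perm (Fin r)) (x : Fin r → ℝ) :
    permAct (σ * τ) x = permAct σ (permAct τ x) := by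
  funext i; simp [permAct]

lemma permAct_signAct {r : ℕ} (σ : Equiv.Perm (Fin r)) (j : Fin r) (x : Fin r → ℝ) :
    permAct σ (signAct j x) = signAct (σ j) (permAct σ x) := by
  funext i
  have hiff : σ⁻¹ i = j ↔ i = σ j := by
    constructor
    · intro h; rw [← h]; simp
    · intro h; rw [h]; simp
  simp only [permAct, signAct]
  by_cases hc : i = σ j
  · rw [if_pos hc, if_pos (hiff.mpr hc)]
  · rw [if_neg hc, if_neg (fun hh => hc (hiff.mp hh))]

lemma key_stab {r : ℕ} (U : Set (Fin r → ℝ))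
    (hUperm : ∀ σ : Equiv.Perm (Fin r), ∀ x ∈ U, permAct σ x ∈ U)
    (z : Fin r) (h : (Fin r → ℝ) → ℝ)
    (hswap : ∀ i j : Fin r, i ≠ z → j ≠ z → ∀ x ∈ U,
      h (permAct (Equiv.swap i j) x) = h x)
    (π : Equiv.Perm (Fin r)) (hπ : π z = z) :
    ∀ y ∈ U, h (permAct π y) = h y := by
  classical
  set p : Fin r → Prop := fun a => a ≠ z with hp
  have h₁ : ∀ a, p a ↔ p (π a) := by
    intro a
    simp only [hp]
    constructor
    · intro ha hc
      exact ha (π.injective (by rw [hc, hπ]))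
    · intro ha hc
      exact ha (by rw [hc, hπ])
  have h₂ : ∀ a, π a ≠ a → p a := by
    intro a ha hc
    exact ha (by rw [hc, hπ])
  have hof : Equiv.Perm.ofSubtype (π.subtypePerm (fun a => (h₁ a).symm)) = π :=
    Equiv.Perm.ofSubtype_subtypePerm (fun a => (h₁ a).symm) h₂
  have main : ∀ g : Equiv.Perm (Subtype p),
      ∀ y ∈ U, h (permAct (Equiv.Perm.ofSubtype g) y) = h y := by
    intro g
    refine Equiv.Perm.swap_induction_on g ?_ ?_
    · intro y hy
      have he : permAct (1 : Equiv.Perm (Fin r)) y = y := by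
        funext i; simp [permAct]
      rw [map_one, he]
    · intro f a b hab ih y hy
      rw [map_mul, permAct_mul, Equiv.Perm.ofSubtype_swap_eq,
        hswap _ _ a.2 b.2 _ (hUperm _ y hy), ih y hy]
  intro y hy
  rw [← hof]
  exact main _ y hy

/-- A map `Φ = (h_1, …, h_r) : U → ℝ^r` on a signed-permutation invariant set `U ⊆ ℝ^r`
is equivariant for all coordinate permutations and sign changes iff there is a single
function `h` such that `h_i = h ∘ p_{1i}`, `h` is odd in the first variable, even in the
other variables and symmetric in the variables beyond the first.  (The first coordinate
is indexed by `⟨0, hr⟩`.) -/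
theorem signed_perm_equivariance_iff (r : ℕ) (hr : 0 < r) (U : Set (Fin r → ℝ))
    (hUperm : ∀ σ : Equiv.Perm (Fin r), ∀ x ∈ U, permAct σ x ∈ U)
    (hUsign : ∀ j : Fin r, ∀ x ∈ U, signAct j x ∈ U)
    (Φ : (Fin r → ℝ) → (Fin r → ℝ)) :
    ((∀ σ : Equiv.Perm (Fin r), ∀ x ∈ U, Φ (permAct σ x) = permAct σ (Φ x)) ∧
      (∀ j : Fin r, ∀ x ∈ U, Φ (signAct j x) = signAct j (Φ x)))
    ↔ ∃ h : (Fin r → ℝ) → ℝ,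
        (∀ x ∈ U, ∀ i : Fin r, Φ x i = h (permAct (Equiv.swap ⟨0, hr⟩ i) x)) ∧
        (∀ x ∈ U, h (signAct ⟨0, hr⟩ x) = -h x) ∧
        (∀ i : Fin r, i ≠ ⟨0, hr⟩ → ∀ x ∈ U, h (signAct i x) = h x) ∧
        (∀ i j : Fin r, i ≠ ⟨0, hr⟩ → j ≠ ⟨0, hr⟩ → ∀ x ∈ U,
          h (permAct (Equiv.swap i j) x) = h x) := by
  classical
  set z : Fin r := ⟨0, hr⟩ with hz
  constructor
  · rintro ⟨hperm, hsign⟩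
    refine ⟨fun x => Φ x z, ?_, ?_, ?_, ?_⟩
    · intro x hx i
      show Φ x i = Φ (permAct (Equiv.swap z i) x) z
      rw [hperm (Equiv.swap z i) x hx]
      simp [permAct, Equiv.swap_inv, Equiv.swap_apply_left]
    · intro x hx
      show Φ (signAct z x) z = -Φ x z
      rw [hsign z x hx]
      simp [signAct]
    · intro i hi x hx
      show Φ (signAct i x) z = Φ x z
      rw [hsign i x hx]
      simp only [signAct]
      rw [if_neg (fun hh : z = i => hi hh.symm)]
    · intro i j hi hj x hx
      show Φ (permAct (Equiv.swap i j) x) z = Φ x z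
      rw [hperm _ x hx]
      simp [permAct, Equiv.swap_inv,
        Equiv.swap_apply_of_ne_of_ne (Ne.symm hi) (Ne.symm hj)]
  · rintro ⟨h, h1, h2, h3, h4⟩
    have key := key_stab U hUperm z h h4
    constructor
    · intro σ x hx
      funext i
      have hx' := hUperm σ x hx
      rw [h1 _ hx' i]
      show _ = Φ x (σ⁻¹ i)
      rw [h1 x hx (σ⁻¹ i), ← permAct_mul]
      set a := σ⁻¹ i with ha
      have hdec : Equiv.swap z i * σ
          = (Equiv.swap z i * σ * Equiv.swap z a) * Equiv.swap z a := by
        rw [mul_assoc, Equiv.swap_mul_self, mul_one]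
      rw [hdec, permAct_mul]
      refine key _ ?_ _ (hUperm _ x hx)
      simp [Equiv.Perm.mul_apply, ha, Equiv.swap_apply_left, Equiv.swap_apply_right]
    · intro j x hx
      funext i
      have hx' := hUsign j x hx
      rw [h1 _ hx' i, permAct_signAct]
      by_cases hij : i = j
      · subst hij
        rw [Equiv.swap_apply_right, h2 _ (hUperm _ x hx)]
        simp [signAct, h1 x hx i]
      · have hne : Equiv.swap z i j ≠ z := by
          intro hc
          apply hij
          have : Equiv.swap z i j = Equiv.swap z i i := by
            rw [hc, Equiv.swap_apply_right]
          exact ((Equiv.swap z i).injective this).symm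
        rw [h3 _ hne _ (hUperm _ x hx)]
        simp [signAct, hij, h1 x hx i]
end

section
/- Let r ≥ 1 and let g = ∏_{i=1}^r sl(2,ℝ) be the product real Lie algebra of r copies of the Lie algebra of traceless real 2×2 matrices, with componentwise bracket. For each i, let H_i ∈ g be the element whose i-th component is the matrix ((0,1),(1,0)) and whose other components are 0, and let Y_i ∈ g be the element whose i-th component is ((1,0),(0,−1)) and whose other components are 0. Let 𝔞 ⊆ g be the real span of H_1,…,H_r, and for V = Σ_i c_i H_i ∈ 𝔞 write JV := Σ_i c_i Y_i. Let 𝔞' ⊆ 𝔞 be a linear subspace and set W = 𝔞' + J(𝔞') (the span of 𝔞' and J(𝔞')). Then W is a Lie triple system of g, i.e. ⁅⁅u,v⁆,w⁆ ∈ W for all u, v, w ∈ W, if and only if 𝔞' is spanned by vectors V_1,…,V_k of the form V_m = Σ_{i ∈ S_m} ε_{m,i} H_i, where each ε_{m,i} ∈ {1,−1} and the index sets S_m ⊆ {1,…,r} are nonempty and pairwise disjoint. -/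
/-- `g = ∏_{i=1}^r sl(2,ℝ)`, modeled as `r`-tuples of real `2 × 2` matrices with the
componentwise commutator bracket (all elements occurring below are traceless in each
component). -/
abbrev slProd (r : ℕ) := Fin r → Matrix (Fin 2) (Fin 2) ℝ

/-- `H_i`: the tuple whose `i`-th component is `((0,1),(1,0))` and whose other
components are `0`. -/
def Hvec (r : ℕ) (i : Fin r) : slProd r :=
  Pi.single i !![(0 : ℝ), 1; 1, 0]

/-- `Y_i`: the tuple whose `i`-th component is `((1,0),(0,-1))` and whose other
components are `0`. -/
def Yvec (r : ℕ) (i : Fin r) : slProd r :=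
  Pi.single i !![(1 : ℝ), 0; 0, -1]

/-- The `ℝ`-linear map `J` with `J (H_i) = Y_i` (componentwise right multiplication by
`((0,-1),(1,0))`); on `𝔞 = span {H_1, …, H_r}` it sends `Σ c_i H_i` to `Σ c_i Y_i`. -/
noncomputable def Jmap (r : ℕ) : slProd r →ₗ[ℝ] slProd r :=
  LinearMap.pi fun i =>
    (LinearMap.mulRight ℝ !![(0 : ℝ), -1; 1, 0]).comp (LinearMap.proj i)

namespace LTSaux

def Xm : Matrix (Fin 2) (Fin 2) ℝ := !![0,1;1,0]
def Zm : Matrix (Fin 2) (Fin 2) ℝ := !![1,0;0,-1]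

noncomputable def hmap (r : ℕ) : (Fin r → ℝ) →ₗ[ℝ] slProd r where
  toFun a := fun i => a i • Xm
  map_add' a b := by funext i; simp [add_smul]
  map_smul' t a := by funext i; simp [mul_smul]

noncomputable def zmap (r : ℕ) : (Fin r → ℝ) →ₗ[ℝ] slProd r where
  toFun a := fun i => a i • Zm
  map_add' a b := by funext i; simp [add_smul]
  map_smul' t a := by funext i; simp [mul_smul]

noncomputable def cX (r : ℕ) : slProd r →ₗ[ℝ] (Fin r → ℝ) where
  toFun u := fun i => u i 0 1
  map_add' u v := by funext i; simp
  map_smul' t u := by funext i; simp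

lemma hmap_apply (r : ℕ) (a : Fin r → ℝ) (i : Fin r) : hmap r a i = a i • Xm := rfl
lemma zmap_apply (r : ℕ) (a : Fin r → ℝ) (i : Fin r) : zmap r a i = a i • Zm := rfl

lemma cX_hmap (r : ℕ) (a : Fin r → ℝ) : cX r (hmap r a) = a := by
  funext i
  show (a i • Xm) 0 1 = a i
  simp [Xm]

lemma Jmap_apply (r : ℕ) (u : slProd r) (i : Fin r) :
    Jmap r u i = u i * !![(0 : ℝ), -1; 1, 0] := rfl

lemma Jmap_hmap (r : ℕ) (a : Fin r → ℝ) : Jmap r (hmap r a) = zmap r a := by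
  funext i
  rw [Jmap_apply, hmap_apply, zmap_apply, smul_mul_assoc]
  congr 1
  ext j k
  fin_cases j <;> fin_cases k <;> simp [Xm, Zm, Matrix.mul_apply, Fin.sum_univ_two]

lemma Hvec_eq (r : ℕ) (i : Fin r) : Hvec r i = hmap r (Pi.single i 1) := by
  funext j
  rw [hmap_apply]
  rcases eq_or_ne j i with rfl | h
  · simp [Hvec, Pi.single_eq_same, Xm]
  · simp [Hvec, Pi.single_eq_of_ne h, Pi.single_eq_of_ne h]

lemma hmap_eq_sum (r : ℕ) (a : Fin r → ℝ) : hmap r a = ∑ i, a i • Hvec r i := by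
  have h2 : ∑ i, a i • Hvec r i = hmap r (∑ i, a i • (Pi.single i 1 : Fin r → ℝ)) := by
    rw [map_sum]
    exact Finset.sum_congr rfl fun i _ => by rw [map_smul, Hvec_eq]
  rw [h2]
  congr 1
  funext j
  rw [Finset.sum_apply]
  simp [Pi.single_apply]

lemma mem_span_H (r : ℕ) (V : slProd r) :
    V ∈ Submodule.span ℝ (Set.range (Hvec r)) ↔ ∃ a, V = hmap r a := by
  constructor
  · intro hV
    induction hV using Submodule.span_induction with
    | mem x hx =>
      obtain ⟨i, rfl⟩ := hx
      exact ⟨Pi.single i 1, (Hvec_eq r i)⟩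
    | zero => exact ⟨0, by simp⟩
    | add x y _ _ hx hy =>
      obtain ⟨a, rfl⟩ := hx; obtain ⟨b, rfl⟩ := hy
      exact ⟨a + b, by simp⟩
    | smul t x _ hx =>
      obtain ⟨a, rfl⟩ := hx
      exact ⟨t • a, by simp⟩
  · rintro ⟨a, rfl⟩
    rw [hmap_eq_sum]
    exact Submodule.sum_mem _ fun i _ =>
      Submodule.smul_mem _ _ (Submodule.subset_span ⟨i, rfl⟩)

-- the triple bracket computation
lemma trip (r : ℕ) (a b c d e f : Fin r → ℝ) :
    ⁅⁅hmap r a + zmap r b, hmap r c + zmap r d⁆, hmap r e + zmap r f⁆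
      = hmap r (fun i => 4 * ((a i * d i - b i * c i) * f i))
        + zmap r (fun i => -4 * ((a i * d i - b i * c i) * e i)) := by
  funext i
  show ⁅⁅(hmap r a + zmap r b) i, (hmap r c + zmap r d) i⁆, (hmap r e + zmap r f) i⁆ = _
  have : ∀ (u v : Matrix (Fin 2) (Fin 2) ℝ), ⁅u, v⁆ = u * v - v * u := fun u v => rfl
  show ⁅⁅a i • Xm + b i • Zm, c i • Xm + d i • Zm⁆, e i • Xm + f i • Zm⁆
      = (4 * ((a i * d i - b i * c i) * f i)) • Xm
        + (-4 * ((a i * d i - b i * c i) * e i)) • Zm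
  rw [this, this]
  ext j k
  fin_cases j <;> fin_cases k <;>
    simp [Xm, Zm, Matrix.mul_apply, Fin.sum_univ_two, Matrix.sub_apply, Matrix.add_apply] <;>
    ring


noncomputable def c00 (r : ℕ) : slProd r →ₗ[ℝ] (Fin r → ℝ) where
  toFun u := fun i => u i 0 0
  map_add' u v := by funext i; simp
  map_smul' t u := by funext i; simp

lemma cX_zmap (r : ℕ) (b : Fin r → ℝ) : cX r (zmap r b) = 0 := by
  funext i
  show (b i • Zm) 0 1 = 0
  simp [Zm]

lemma c00_hmap (r : ℕ) (a : Fin r → ℝ) : c00 r (hmap r a) = 0 := by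
  funext i
  show (a i • Xm) 0 0 = 0
  simp [Xm]

lemma c00_zmap (r : ℕ) (b : Fin r → ℝ) : c00 r (zmap r b) = b := by
  funext i
  show (b i • Zm) 0 0 = b i
  simp [Zm]

lemma hz_inj (r : ℕ) (p q p' q' : Fin r → ℝ)
    (h : hmap r p + zmap r q = hmap r p' + zmap r q') : p = p' ∧ q = q' := by
  constructor
  · have := congrArg (cX r) h
    simpa [map_add, cX_hmap, cX_zmap] using this
  · have := congrArg (c00 r) h
    simpa [map_add, c00_hmap, c00_zmap] using this

lemma cX_Hvec (r : ℕ) (i : Fin r) : cX r (Hvec r i) = Pi.single i 1 := by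
  rw [Hvec_eq, cX_hmap]

end LTSaux

open Finset in
theorem core (r : ℕ) (A : Submodule ℝ (Fin r → ℝ))
    (hA : ∀ a ∈ A, ∀ b ∈ A, ∀ c ∈ A, a * b * c ∈ A) :
    ∃ (k : ℕ) (v : Fin k → (Fin r → ℝ)) (S : Fin k → Finset (Fin r)),
      (∀ m, (S m).Nonempty) ∧ (∀ m n, m ≠ n → Disjoint (S m) (S n)) ∧
      (∀ m, ∀ i ∈ S m, v m i = 1 ∨ v m i = -1) ∧
      (∀ m, ∀ i ∉ S m, v m i = 0) ∧
      Submodule.span ℝ (Set.range v) = A := by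
  classical
  set M : Submodule ℝ (Fin r → ℝ) :=
    { carrier := {x | ∀ c ∈ A, x * c ∈ A}
      add_mem' := fun {x y} hx hy c hc => by
        simpa [add_mul] using A.add_mem (hx c hc) (hy c hc)
      zero_mem' := fun c hc => by simpa using A.zero_mem
      smul_mem' := fun t x hx c hc => by
        simpa [smul_mul_assoc] using A.smul_mem t (hx c hc) } with hM
  have hMmem : ∀ x : Fin r → ℝ, x ∈ M ↔ ∀ c ∈ A, x * c ∈ A := fun x => Iff.rfl
  have hMmul : ∀ x ∈ M, ∀ y ∈ M, x * y ∈ M := by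
    intro x hx y hy
    rw [hMmem] at *
    intro c hc
    rw [mul_assoc]; exact hx _ (hy c hc)
  have hAAM : ∀ a ∈ A, ∀ b ∈ A, a * b ∈ M := by
    intro a ha b hb
    rw [hMmem]
    intro c hc; exact hA a ha b hb c hc
  -- separation
  have sep : ∀ i j : Fin r, (∃ w ∈ M, w i ≠ 0) → (∃ x ∈ M, x i ≠ x j) →
      ∃ y ∈ M, y i = 1 ∧ y j = 0 := by
    rintro i j ⟨w, hw, hwi⟩ ⟨x, hx, hxij⟩
    have hfin : ({t : ℝ | x i + t * w i = 0} ∪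
        {t : ℝ | x i + t * w i = x j + t * w j}).Finite := by
      apply Set.Finite.union
      · apply Set.Finite.subset (Set.finite_singleton (-(x i)/(w i)))
        intro t ht
        simp only [Set.mem_setOf_eq] at ht
        simp only [Set.mem_singleton_iff]
        rw [eq_div_iff hwi]; linarith
      · apply Set.Finite.subset (Set.finite_singleton ((x j - x i)/(w i - w j)))
        intro t ht
        simp only [Set.mem_setOf_eq] at ht
        simp only [Set.mem_singleton_iff]
        rcases eq_or_ne (w i) (w j) with h | h
        · rw [h] at ht
          exact absurd (by linarith : x i = x j) hxij
        · rw [eq_div_iff (sub_ne_zero.mpr h)]; linear_combination ht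
    obtain ⟨t, ht⟩ := (hfin.infinite_compl).nonempty
    simp only [Set.mem_compl_iff, Set.mem_union, Set.mem_setOf_eq, not_or] at ht
    obtain ⟨ht1, ht2⟩ := ht
    set u : Fin r → ℝ := x + t • w with hu
    have hu1 : u ∈ M := M.add_mem hx (M.smul_mem t hw)
    have hui : u i = x i + t * w i := by simp [hu]
    have huj : u j = x j + t * w j := by simp [hu]
    have hαβ : u i ≠ u j := by rw [hui, huj]; exact ht2
    have hα : u i ≠ 0 := by rw [hui]; exact ht1
    refine ⟨(u i * (u i - u j))⁻¹ • (u * u - u j • u),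
      M.smul_mem _ (M.sub_mem (hMmul u hu1 u hu1) (M.smul_mem _ hu1)), ?_, ?_⟩
    · have : u i - u j ≠ 0 := sub_ne_zero.mpr hαβ
      simp only [Pi.smul_apply, Pi.sub_apply, Pi.mul_apply, smul_eq_mul]
      field_simp
    · simp only [Pi.smul_apply, Pi.sub_apply, Pi.mul_apply, smul_eq_mul]
      ring
  -- the equivalence-ish relation
  set rel : Fin r → Fin r → Prop := fun i j => ∀ x ∈ M, x i = x j with hreldef
  have hrefl : ∀ i, rel i i := fun i x _ => rfl
  have hsymm : ∀ {i j}, rel i j → rel j i := fun h x hx => (h x hx).symm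
  have htrans : ∀ {i j l}, rel i j → rel j l → rel i l :=
    fun h1 h2 x hx => (h1 x hx).trans (h2 x hx)
  -- indicator of each class
  have indicator : ∀ i : Fin r, (∃ w ∈ M, w i ≠ 0) →
      ∃ e ∈ M, (∀ l, rel i l → e l = 1) ∧ (∀ l, ¬ rel i l → e l = 0) := by
    intro i hi
    obtain ⟨w, hw, hwi⟩ := hi
    have hy : ∀ j : Fin r, ∃ y ∈ M, y i = 1 ∧ (¬ rel i j → y j = 0) := by
      intro j
      by_cases hij : rel i j
      · refine ⟨(w i * w i)⁻¹ • (w * w), M.smul_mem _ (hMmul w hw w hw), ?_,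
          fun h => absurd hij h⟩
        simp only [Pi.smul_apply, Pi.mul_apply, smul_eq_mul]
        field_simp
      · have : ∃ x ∈ M, x i ≠ x j := by
          by_contra h
          push_neg at h
          exact hij (fun x hx => h x hx)
        obtain ⟨y, hyM, h1, h0⟩ := sep i j ⟨w, hw, hwi⟩ this
        exact ⟨y, hyM, h1, fun _ => h0⟩
    choose y hyM hyi hyj using hy
    have key : ∀ (s : Finset (Fin r)) (x : Fin r → ℝ), x ∈ M → x * ∏ j ∈ s, y j ∈ M := by
      intro s
      induction s using Finset.induction with
      | empty => simpa using fun x hx => hx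
      | @insert a s hns ih =>
        intro x hx
        rw [Finset.prod_insert hns, ← mul_assoc]
        exact ih _ (hMmul x hx _ (hyM _))
    have heM : (∏ j : Fin r, y j) ∈ M := by
      rw [← Finset.mul_prod_erase Finset.univ y (Finset.mem_univ i)]
      exact key _ _ (hyM i)
    refine ⟨∏ j : Fin r, y j, heM, ?_, ?_⟩
    · intro l hl
      have h1 : (∏ j : Fin r, y j) l = (∏ j : Fin r, y j) i := (hl _ heM).symm
      rw [h1, Finset.prod_apply]
      exact Finset.prod_eq_one (fun j _ => hyi j)
    · intro l hl
      rw [Finset.prod_apply]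
      exact Finset.prod_eq_zero (Finset.mem_univ l) (hyj l hl)
  -- support and representatives
  set I : Finset (Fin r) := Finset.univ.filter (fun i => ∃ a ∈ A, a i ≠ 0) with hIdef
  have hImem : ∀ i : Fin r, i ∈ I ↔ ∃ a ∈ A, a i ≠ 0 := by
    intro i; simp [hIdef]
  have hIM : ∀ i ∈ I, ∃ w ∈ M, w i ≠ 0 := by
    intro i hi
    obtain ⟨a, ha, hai⟩ := (hImem i).mp hi
    exact ⟨a * a, hAAM a ha a ha, by
      show a i * a i ≠ 0
      exact mul_ne_zero hai hai⟩
  have relI : ∀ i ∈ I, ∀ j, rel i j → j ∈ I := by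
    intro i hi j hij
    obtain ⟨a, ha, hai⟩ := (hImem i).mp hi
    rw [hImem]
    refine ⟨a, ha, fun h => hai ?_⟩
    have h2 := hij (a * a) (hAAM a ha a ha)
    have : a i * a i = a j * a j := h2
    rw [h, mul_zero] at this
    exact mul_self_eq_zero.mp this
  set T : Finset (Fin r) := I.filter (fun t => ∀ j ∈ I, rel t j → t ≤ j) with hTdef
  have hTI : ∀ t ∈ T, t ∈ I := fun t ht => (Finset.mem_filter.mp ht).1
  have hrep : ∀ i ∈ I, ∃ t ∈ T, rel t i := by
    intro i hi
    have hne : (I.filter (fun j => rel i j)).Nonempty :=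
      ⟨i, Finset.mem_filter.mpr ⟨hi, hrefl i⟩⟩
    set t := (I.filter (fun j => rel i j)).min' hne with htdef
    have htmem := Finset.min'_mem _ hne
    rw [← htdef] at htmem
    obtain ⟨htI, hti⟩ := Finset.mem_filter.mp htmem
    refine ⟨t, Finset.mem_filter.mpr ⟨htI, ?_⟩, hsymm hti⟩
    intro j hj htj
    exact Finset.min'_le _ _ (Finset.mem_filter.mpr ⟨hj, htrans hti htj⟩)
  have hrepu : ∀ t ∈ T, ∀ t' ∈ T, ∀ i, rel t i → rel t' i → t = t' := by
    intro t ht t' ht' i h1 h2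
    have h12 : rel t t' := htrans h1 (hsymm h2)
    have e1 := (Finset.mem_filter.mp ht).2 t' (hTI t' ht') h12
    have e2 := (Finset.mem_filter.mp ht').2 t (hTI t ht) (hsymm h12)
    exact le_antisymm e1 e2
  -- choose witnesses for each member of I
  have hq : ∀ t : Fin r, ∃ q : (Fin r → ℝ) × (Fin r → ℝ), t ∈ I →
      q.1 ∈ A ∧ q.1 t ≠ 0 ∧ q.2 ∈ M ∧ (∀ l, rel t l → q.2 l = 1) ∧
      (∀ l, ¬ rel t l → q.2 l = 0) := by
    intro t
    by_cases ht : t ∈ I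
    · obtain ⟨a, ha, hat⟩ := (hImem t).mp ht
      obtain ⟨e, heM, he1, he0⟩ := indicator t (hIM t ht)
      exact ⟨(a, e), fun _ => ⟨ha, hat, heM, he1, he0⟩⟩
    · exact ⟨(0, 0), fun h => absurd h ht⟩
  choose q hq using hq
  have hqav : ∀ t ∈ I, (q t).1 ∈ A ∧ (q t).1 t ≠ 0 := fun t ht => ⟨(hq t ht).1, (hq t ht).2.1⟩
  let av : Fin r → (Fin r → ℝ) := fun t => (q t).1
  let ev : Fin r → (Fin r → ℝ) := fun t => (q t).2
  let vv : Fin r → (Fin r → ℝ) := fun t => (av t t)⁻¹ • (ev t * av t)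
  have hav : ∀ t, av t = (q t).1 := fun t => rfl
  have hev : ∀ t, ev t = (q t).2 := fun t => rfl
  -- key facts, for t ∈ I
  have K1 : ∀ t ∈ I, vv t ∈ A := by
    intro t ht
    obtain ⟨ha, hat, heM, he1, he0⟩ := hq t ht
    exact A.smul_mem _ (heM _ ha)
  have Ksq : ∀ t ∈ I, ∀ i, rel t i → av t i * av t i = av t t * av t t := by
    intro t ht i hti
    obtain ⟨ha, hat, heM, he1, he0⟩ := hq t ht
    exact (hti (av t * av t) (hAAM _ ha _ ha)).symm
  have Kati : ∀ t ∈ I, ∀ i, rel t i → av t i ≠ 0 := by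
    intro t ht i hti
    obtain ⟨ha, hat, heM, he1, he0⟩ := hq t ht
    intro h
    have := Ksq t ht i hti
    rw [h, mul_zero] at this
    exact hat (mul_self_eq_zero.mp this.symm)
  have Kval : ∀ t ∈ I, ∀ i, rel t i → vv t i = (av t t)⁻¹ * av t i := by
    intro t ht i hti
    obtain ⟨ha, hat, heM, he1, he0⟩ := hq t ht
    show (av t t)⁻¹ * (ev t i * av t i) = _
    rw [hev, he1 i hti, one_mul]
  have K2 : ∀ t ∈ I, ∀ i, rel t i → vv t i = 1 ∨ vv t i = -1 := by
    intro t ht i hti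
    obtain ⟨ha, hat, heM, he1, he0⟩ := hq t ht
    rw [Kval t ht i hti]
    rcases mul_self_eq_mul_self_iff.mp (Ksq t ht i hti) with h | h
    · left; rw [h]; field_simp; exact div_self hat
    · right; rw [h]; field_simp; rw [div_self hat]
  have K3 : ∀ t ∈ I, ∀ i, ¬ rel t i → vv t i = 0 := by
    intro t ht i hti
    obtain ⟨ha, hat, heM, he1, he0⟩ := hq t ht
    show (av t t)⁻¹ * (ev t i * av t i) = 0
    rw [hev, he0 i hti, zero_mul, mul_zero]
  have K4 : ∀ t ∈ I, ∀ a ∈ A, ∀ i, rel t i → a i = a t * vv t i := by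
    intro t ht a ha i hti
    obtain ⟨ha', hat, heM, he1, he0⟩ := hq t ht
    rw [Kval t ht i hti]
    have h1 : a t * av t t = a i * av t i := hti (a * av t) (hAAM _ ha _ ha')
    have h2 := Ksq t ht i hti
    have hati := Kati t ht i hti
    have hatt : av t t ≠ 0 := hat
    rw [show a t * ((av t t)⁻¹ * av t i) = (a t * av t i) / av t t by ring, eq_div_iff hatt]
    apply mul_right_cancel₀ hati
    linear_combination (-(av t t)) * h1 - (a t) * h2
  have K5 : ∀ a ∈ A, a = ∑ t ∈ T, a t • vv t := by
    intro a ha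
    funext i
    rw [Finset.sum_apply]
    by_cases hiI : i ∈ I
    · obtain ⟨t₀, ht₀, hrel₀⟩ := hrep i hiI
      rw [Finset.sum_eq_single_of_mem t₀ ht₀]
      · show a i = a t₀ * vv t₀ i
        exact K4 t₀ (hTI t₀ ht₀) a ha i hrel₀
      · intro t htT htne
        show a t * vv t i = 0
        have : ¬ rel t i := fun h => htne (hrepu t htT t₀ ht₀ i h hrel₀)
        rw [K3 t (hTI t htT) i this, mul_zero]
    · have hai : a i = 0 := by
        by_contra h
        exact hiI ((hImem i).mpr ⟨a, ha, h⟩)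
      rw [hai]
      symm
      apply Finset.sum_eq_zero
      intro t htT
      show a t * vv t i = 0
      have : ¬ rel t i := fun h => hiI (relI t (hTI t htT) i h)
      rw [K3 t (hTI t htT) i this, mul_zero]
  -- assemble
  refine ⟨T.card, fun m => vv (T.equivFin.symm m : Fin r),
    fun m => I.filter (fun j => rel (↑(T.equivFin.symm m)) j), ?_, ?_, ?_, ?_, ?_⟩
  · intro m
    refine ⟨(T.equivFin.symm m : Fin r), Finset.mem_filter.mpr ⟨?_, hrefl _⟩⟩
    exact hTI _ (T.equivFin.symm m).2
  · intro m n hmn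
    rw [Finset.disjoint_left]
    intro j hjm hjn
    have h1 := (Finset.mem_filter.mp hjm).2
    have h2 := (Finset.mem_filter.mp hjn).2
    have : (T.equivFin.symm m : Fin r) = (T.equivFin.symm n : Fin r) :=
      hrepu _ (T.equivFin.symm m).2 _ (T.equivFin.symm n).2 j h1 h2
    exact hmn (T.equivFin.symm.injective (Subtype.ext this))
  · intro m i hi
    exact K2 _ (hTI _ (T.equivFin.symm m).2) i (Finset.mem_filter.mp hi).2
  · intro m i hi
    apply K3 _ (hTI _ (T.equivFin.symm m).2) i
    intro h
    exact hi (Finset.mem_filter.mpr ⟨relI _ (hTI _ (T.equivFin.symm m).2) i h, h⟩)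
  · apply le_antisymm
    · rw [Submodule.span_le]
      rintro x ⟨m, rfl⟩
      exact K1 _ (hTI _ (T.equivFin.symm m).2)
    · intro a ha
      rw [K5 a ha]
      apply Submodule.sum_mem
      intro t htT
      apply Submodule.smul_mem
      apply Submodule.subset_span
      refine ⟨T.equivFin ⟨t, htT⟩, ?_⟩
      show vv ↑(T.equivFin.symm (T.equivFin ⟨t, htT⟩)) = vv t
      rw [Equiv.symm_apply_apply]

open Finset in
theorem core_rev (r k : ℕ) (v : Fin k → (Fin r → ℝ)) (S : Fin k → Finset (Fin r))
    (hdisj : ∀ m n, m ≠ n → Disjoint (S m) (S n))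
    (hsign : ∀ m, ∀ i ∈ S m, v m i = 1 ∨ v m i = -1)
    (hsupp : ∀ m, ∀ i ∉ S m, v m i = 0) :
    ∀ a ∈ Submodule.span ℝ (Set.range v), ∀ b ∈ Submodule.span ℝ (Set.range v),
      ∀ c ∈ Submodule.span ℝ (Set.range v),
      a * b * c ∈ Submodule.span ℝ (Set.range v) := by
  classical
  intro a ha b hb c hc
  rw [Submodule.mem_span_range_iff_exists_fun] at ha hb hc
  obtain ⟨α, hα⟩ := ha
  obtain ⟨β, hβ⟩ := hb
  obtain ⟨γ, hγ⟩ := hc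
  have key : a * b * c = ∑ m, (α m * β m * γ m) • v m := by
    funext i
    by_cases hi : ∃ m, i ∈ S m
    · obtain ⟨m₀, hm₀⟩ := hi
      have hval : ∀ x : Fin k → ℝ, (∑ m, x m • v m) i = x m₀ * v m₀ i := by
        intro x
        rw [Finset.sum_apply]
        apply Finset.sum_eq_single_of_mem m₀ (Finset.mem_univ m₀)
        intro m _ hm
        have hns : i ∉ S m := fun h => (Finset.disjoint_left.mp (hdisj m m₀ hm) h) hm₀
        show x m * v m i = 0
        rw [hsupp m i hns, mul_zero]
      have hsq : v m₀ i * v m₀ i = 1 := by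
        rcases hsign m₀ i hm₀ with h | h <;> rw [h] <;> ring
      show a i * b i * c i = _
      rw [← hα, ← hβ, ← hγ, hval α, hval β, hval γ,
        hval (fun m => α m * β m * γ m)]
      linear_combination (α m₀ * β m₀ * γ m₀ * v m₀ i) * hsq
    · push_neg at hi
      have hz : ∀ x : Fin k → ℝ, (∑ m, x m • v m) i = 0 := by
        intro x
        rw [Finset.sum_apply]
        apply Finset.sum_eq_zero
        intro m _
        show x m * v m i = 0
        rw [hsupp m i (hi m), mul_zero]
      show a i * b i * c i = _
      rw [← hα, hz α, zero_mul, zero_mul, hz]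
  rw [key]
  exact Submodule.sum_mem _ fun m _ =>
    Submodule.smul_mem _ _ (Submodule.subset_span ⟨m, rfl⟩)


open LTSaux in
/-- Let `𝔞' ⊆ 𝔞 = span {H_1, …, H_r}` be a linear subspace and `W = 𝔞' + J(𝔞')`.  Then
`W` is a Lie triple system of `g = ∏ sl(2,ℝ)` iff `𝔞'` is spanned by vectors
`V_m = Σ_{i ∈ S_m} ε_{m,i} H_i` with `ε_{m,i} ∈ {1,-1}` and nonempty pairwise disjoint
index sets `S_m`. -/
theorem lieTripleSystem_iff_canonical_basis (r : ℕ) (hr : 1 ≤ r)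
    (𝔞' : Submodule ℝ (slProd r))
    (h𝔞' : 𝔞' ≤ Submodule.span ℝ (Set.range (Hvec r))) :
    (∀ u ∈ 𝔞' ⊔ 𝔞'.map (Jmap r), ∀ v ∈ 𝔞' ⊔ 𝔞'.map (Jmap r),
      ∀ w ∈ 𝔞' ⊔ 𝔞'.map (Jmap r), ⁅⁅u, v⁆, w⁆ ∈ 𝔞' ⊔ 𝔞'.map (Jmap r))
    ↔ ∃ (k : ℕ) (V : Fin k → slProd r) (S : Fin k → Finset (Fin r))
        (ε : Fin k → Fin r → ℝ),
        (∀ m, (S m).Nonempty) ∧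
        (∀ m n, m ≠ n → Disjoint (S m) (S n)) ∧
        (∀ m, ∀ i ∈ S m, ε m i = 1 ∨ ε m i = -1) ∧
        (∀ m, V m = ∑ i ∈ S m, ε m i • Hvec r i) ∧
        𝔞' = Submodule.span ℝ (Set.range V) := by
  classical
  set A : Submodule ℝ (Fin r → ℝ) := 𝔞'.map (cX r) with hAdef
  have memA : ∀ a : Fin r → ℝ, a ∈ A ↔ hmap r a ∈ 𝔞' := by
    intro a
    constructor
    · rintro ⟨V, hV, rfl⟩
      obtain ⟨b, rfl⟩ := (mem_span_H r V).mp (h𝔞' hV)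
      rw [cX_hmap]; exact hV
    · intro h; exact ⟨hmap r a, h, cX_hmap r a⟩
  have memW : ∀ u, u ∈ 𝔞' ⊔ 𝔞'.map (Jmap r) ↔
      ∃ a ∈ A, ∃ b ∈ A, u = hmap r a + zmap r b := by
    intro u
    constructor
    · intro hu
      obtain ⟨u1, hu1, u2, hu2, rfl⟩ := Submodule.mem_sup.mp hu
      obtain ⟨V, hV, rfl⟩ := hu2
      obtain ⟨a, rfl⟩ := (mem_span_H r u1).mp (h𝔞' hu1)
      obtain ⟨b, rfl⟩ := (mem_span_H r V).mp (h𝔞' hV)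
      exact ⟨a, (memA a).mpr hu1, b, (memA b).mpr hV, by rw [Jmap_hmap]⟩
    · rintro ⟨a, ha, b, hb, rfl⟩
      exact Submodule.mem_sup.mpr ⟨hmap r a, (memA a).mp ha,
        Jmap r (hmap r b), ⟨hmap r b, (memA b).mp hb, rfl⟩, by rw [Jmap_hmap]⟩
  constructor
  · -- LTS → basis
    intro hLTS
    have hAtriple : ∀ a ∈ A, ∀ b ∈ A, ∀ c ∈ A, a * b * c ∈ A := by
      intro a ha b hb c hc
      have hu : hmap r a + zmap r (0 : Fin r → ℝ) ∈ 𝔞' ⊔ 𝔞'.map (Jmap r) :=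
        (memW _).mpr ⟨a, ha, 0, A.zero_mem, rfl⟩
      have hv : hmap r (0 : Fin r → ℝ) + zmap r b ∈ 𝔞' ⊔ 𝔞'.map (Jmap r) :=
        (memW _).mpr ⟨0, A.zero_mem, b, hb, rfl⟩
      have hw2 : hmap r c + zmap r (0 : Fin r → ℝ) ∈ 𝔞' ⊔ 𝔞'.map (Jmap r) :=
        (memW _).mpr ⟨c, hc, 0, A.zero_mem, rfl⟩
      have hbr := hLTS _ hu _ hv _ hw2
      rw [trip] at hbr
      obtain ⟨p', hp', q', hq', heq⟩ := (memW _).mp hbr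
      obtain ⟨h1, h2⟩ := hz_inj r _ _ _ _ heq
      rw [← h2] at hq'
      have heq2 : a * b * c = (-4 : ℝ)⁻¹ •
          (fun i => -4 * ((a i * b i - (0 : Fin r → ℝ) i * (0 : Fin r → ℝ) i) * c i)) := by
        funext i
        show a i * b i * c i = (-4 : ℝ)⁻¹ * (-4 * ((a i * b i - 0 * 0) * c i))
        ring
      rw [heq2]
      exact A.smul_mem _ hq'
    obtain ⟨k, v, S, hne, hdisj, hsign, hsupp, hspan⟩ := core r A hAtriple
    refine ⟨k, fun m => hmap r (v m), S, v, hne, hdisj, hsign, ?_, ?_⟩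
    · intro m
      show hmap r (v m) = _
      rw [hmap_eq_sum]
      exact (Finset.sum_subset (Finset.subset_univ _)
        (fun i _ hi => by rw [hsupp m i hi, zero_smul])).symm
    · have h1 : 𝔞' = A.map (hmap r) := by
        ext V
        constructor
        · intro hV
          obtain ⟨a, rfl⟩ := (mem_span_H r V).mp (h𝔞' hV)
          exact ⟨a, (memA a).mpr hV, rfl⟩
        · rintro ⟨a, ha, rfl⟩
          exact (memA a).mp ha
      rw [h1, ← hspan, Submodule.map_span, ← Set.range_comp]
      rfl
  · -- basis → LTS
    rintro ⟨k, V, S, ε, hne, hdisj, hsign, hVdef, hspan⟩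
    set v : Fin k → (Fin r → ℝ) := fun m => cX r (V m) with hvdef
    have hveq : ∀ m, v m = ∑ i ∈ S m, ε m i • (Pi.single i 1 : Fin r → ℝ) := by
      intro m
      show cX r (V m) = _
      rw [hVdef m, map_sum]
      exact Finset.sum_congr rfl fun i _ => by rw [map_smul, cX_Hvec]
    have hVeq : ∀ m, V m = hmap r (v m) := by
      intro m
      rw [hveq m, map_sum, hVdef m]
      exact Finset.sum_congr rfl fun i _ => by rw [map_smul, ← Hvec_eq]
    have hval : ∀ m i, i ∈ S m → v m i = ε m i := by
      intro m i hi
      rw [hveq m, Finset.sum_apply]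
      rw [Finset.sum_eq_single_of_mem i hi]
      · simp
      · intro j _ hj
        simp [Pi.single_eq_of_ne (Ne.symm hj)]
    have hsupp : ∀ m, ∀ i ∉ S m, v m i = 0 := by
      intro m i hi
      rw [hveq m, Finset.sum_apply]
      apply Finset.sum_eq_zero
      intro j hj
      have hij : i ≠ j := fun h => hi (h ▸ hj)
      rw [Pi.smul_apply, Pi.single_eq_of_ne hij, smul_zero]
    have hsign' : ∀ m, ∀ i ∈ S m, v m i = 1 ∨ v m i = -1 := by
      intro m i hi
      rw [hval m i hi]
      exact hsign m i hi
    have hA : A = Submodule.span ℝ (Set.range v) := by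
      rw [hAdef, hspan, Submodule.map_span, ← Set.range_comp]
      rfl
    have hAtriple : ∀ a ∈ A, ∀ b ∈ A, ∀ c ∈ A, a * b * c ∈ A := by
      rw [hA]
      exact core_rev r k v S hdisj hsign' hsupp
    intro u hu u' hu' u'' hu''
    obtain ⟨a, ha, b, hb, rfl⟩ := (memW u).mp hu
    obtain ⟨c, hc, d, hd, rfl⟩ := (memW u').mp hu'
    obtain ⟨e, he, f, hf, rfl⟩ := (memW u'').mp hu''
    rw [trip]
    refine (memW _).mpr ⟨_, ?_, _, ?_, rfl⟩
    · have : (fun i => 4 * ((a i * d i - b i * c i) * f i))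
          = (4 : ℝ) • (a * d * f - b * c * f) := by
        funext i
        show _ = (4:ℝ) * (a i * d i * f i - b i * c i * f i)
        ring
      rw [this]
      exact A.smul_mem _ (A.sub_mem (hAtriple a ha d hd f hf) (hAtriple b hb c hc f hf))
    · have : (fun i => -4 * ((a i * d i - b i * c i) * e i))
          = (-4 : ℝ) • (a * d * e - b * c * e) := by
        funext i
        show _ = (-4:ℝ) * (a i * d i * e i - b i * c i * e i)
        ring
      rw [this]
      exact A.smul_mem _ (A.sub_mem (hAtriple a ha d hd e he) (hAtriple b hb c hc e he))
end

section
/- Let r ≥ 1 and let g = ∏_{i=1}^r sl(2,ℝ) be the product real Lie algebra of r copies of the Lie algebra of traceless real 2×2 matrices, with componentwise bracket. For each i, let H_i ∈ g be the element whose i-th component is the matrix ((0,1),(1,0)) and whose other components are 0, and let Y_i ∈ g be the element whose i-th component is ((1,0),(0,−1)) and whose other components are 0. Let 𝔞 ⊆ g be the real span of H_1,…,H_r, and for V = Σ_i c_i H_i ∈ 𝔞 write JV := Σ_i c_i Y_i. Then a family of vectors Ṽ_1,…,Ṽ_k ∈ 𝔞 satisfies the bracket relations ⁅⁅Ṽ_m,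 JṼ_m⁆, JṼ_m⁆ = 4·Ṽ_m and ⁅⁅Ṽ_m, JṼ_m⁆, Ṽ_m⁆ = −4·JṼ_m for every m, together with ⁅⁅Ṽ_m, JṼ_n⁆, JṼ_l⁆ = 0 and ⁅⁅Ṽ_m, JṼ_n⁆, Ṽ_l⁆ = 0 whenever m, n, l are not all equal, if and only if each Ṽ_m has the form Ṽ_m = Σ_{i ∈ S_m} ε_{m,i} H_i with ε_{m,i} ∈ {1,−1} and the (possibly empty) supports S_m ⊆ {1,…,r} pairwise disjoint. -/
noncomputable def Amat : Matrix (Fin 2) (Fin 2) ℝ := !![0, 1; 1, 0]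
noncomputable def Ymat : Matrix (Fin 2) (Fin 2) ℝ := !![1, 0; 0, -1]

lemma lie_lie_AYY (a b d : ℝ) :
    ⁅⁅a • Amat, b • Ymat⁆, d • Ymat⁆ = (a * b * d * 4) • Amat := by
  ext i j
  fin_cases i <;> fin_cases j <;>
    simp [Amat, Ymat, Ring.lie_def, Matrix.mul_apply, Fin.sum_univ_two] <;> ring

lemma lie_lie_AYA (a b d : ℝ) :
    ⁅⁅a • Amat, b • Ymat⁆, d • Amat⁆ = (a * b * d * (-4)) • Ymat := by
  ext i j
  fin_cases i <;> fin_cases j <;>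
    simp [Amat, Ymat, Ring.lie_def, Matrix.mul_apply, Fin.sum_univ_two] <;> ring

lemma smul_Amat_inj {a b : ℝ} (h : a • Amat = b • Amat) : a = b := by
  have h' : (a • Amat) 0 1 = (b • Amat) 0 1 := by rw [h]
  simpa [Amat] using h'

lemma smul_Amat_eq_zero {a : ℝ} (h : a • Amat = 0) : a = 0 := by
  have h' : (a • Amat) 0 1 = (0 : Matrix (Fin 2) (Fin 2) ℝ) 0 1 := by rw [h]
  simpa [Amat] using h'

lemma sum_Hvec_apply (r : ℕ) (γ : Fin r → ℝ) (j : Fin r) :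
    (∑ i, γ i • Hvec r i) j = γ j • Amat := by
  rw [Finset.sum_apply]
  simp [Hvec, Amat, Pi.single_apply, smul_ite, Finset.sum_ite_eq']

lemma Jmap_apply_of (r : ℕ) (X : slProd r) (j : Fin r) {γ : ℝ} (h : X j = γ • Amat) :
    Jmap r X j = γ • Ymat := by
  have h0 : Jmap r X j = X j * !![(0 : ℝ), -1; 1, 0] := rfl
  rw [h0, h, smul_mul_assoc]
  congr 1
  ext i j'
  fin_cases i <;> fin_cases j' <;>
    simp [Amat, Ymat, Matrix.mul_apply, Fin.sum_univ_two]

lemma lie_apply_AYY (r : ℕ) (X Z W : slProd r) (j : Fin r) {a b d : ℝ}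
    (hX : X j = a • Amat) (hZ : Z j = b • Amat) (hW : W j = d • Amat) :
    ⁅⁅X, Jmap r Z⁆, Jmap r W⁆ j = (a * b * d * 4) • Amat := by
  have h0 : ⁅⁅X, Jmap r Z⁆, Jmap r W⁆ j = ⁅⁅X j, Jmap r Z j⁆, Jmap r W j⁆ := rfl
  rw [h0, hX, Jmap_apply_of r Z j hZ, Jmap_apply_of r W j hW, lie_lie_AYY]

lemma lie_apply_AYA (r : ℕ) (X Z W : slProd r) (j : Fin r) {a b d : ℝ}
    (hX : X j = a • Amat) (hZ : Z j = b • Amat) (hW : W j = d • Amat) :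
    ⁅⁅X, Jmap r Z⁆, W⁆ j = (a * b * d * (-4)) • Ymat := by
  have h0 : ⁅⁅X, Jmap r Z⁆, W⁆ j = ⁅⁅X j, Jmap r Z j⁆, W j⁆ := rfl
  rw [h0, hX, Jmap_apply_of r Z j hZ, hW, lie_lie_AYA]

/-- A family `Ṽ_1, …, Ṽ_k` of vectors of `𝔞 = span {H_1, …, H_r}` satisfies the bracket
relations `⁅⁅Ṽ_m, JṼ_m⁆, JṼ_m⁆ = 4 Ṽ_m`, `⁅⁅Ṽ_m, JṼ_m⁆, Ṽ_m⁆ = -4 JṼ_m` and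
`⁅⁅Ṽ_m, JṼ_n⁆, JṼ_l⁆ = ⁅⁅Ṽ_m, JṼ_n⁆, Ṽ_l⁆ = 0` for `m, n, l` not all equal, iff each
`Ṽ_m` has the form `Σ_{i ∈ S_m} ε_{m,i} H_i` with `ε_{m,i} ∈ {1,-1}` and the (possibly
empty) supports `S_m` pairwise disjoint. -/
theorem bracket_relations_iff_signed_orthogonal (r k : ℕ) (V : Fin k → slProd r)
    (hV : ∀ m, V m ∈ Submodule.span ℝ (Set.range (Hvec r))) :
    ((∀ m, ⁅⁅V m, Jmap r (V m)⁆, Jmap r (V m)⁆ = (4 : ℝ) • V m ∧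
        ⁅⁅V m, Jmap r (V m)⁆, V m⁆ = -((4 : ℝ) • Jmap r (V m))) ∧
      (∀ m n l, ¬(m = n ∧ n = l) →
        ⁅⁅V m, Jmap r (V n)⁆, Jmap r (V l)⁆ = 0 ∧ ⁅⁅V m, Jmap r (V n)⁆, V l⁆ = 0))
    ↔ ∃ (S : Fin k → Finset (Fin r)) (ε : Fin k → Fin r → ℝ),
        (∀ m n, m ≠ n → Disjoint (S m) (S n)) ∧
        (∀ m, ∀ i ∈ S m, ε m i = 1 ∨ ε m i = -1) ∧
        (∀ m, V m = ∑ i ∈ S m, ε m i • Hvec r i) := by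
  classical
  constructor
  · rintro ⟨h1, h2⟩
    have hc : ∀ m, ∃ γ : Fin r → ℝ, V m = ∑ i, γ i • Hvec r i := by
      intro m
      obtain ⟨γ, hγ⟩ := (Submodule.mem_span_range_iff_exists_fun ℝ).mp (hV m)
      exact ⟨γ, hγ.symm⟩
    choose c hcV using hc
    have hVj : ∀ m j, V m j = c m j • Amat := by
      intro m j; rw [hcV m]; exact sum_Hvec_apply r (c m) j
    have hcube : ∀ m j, c m j * c m j * c m j = c m j := by
      intro m j
      have hm := congrFun (h1 m).1 j
      rw [lie_apply_AYY r _ _ _ j (hVj m j) (hVj m j) (hVj m j)] at hm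
      have hr : ((4 : ℝ) • V m) j = (4 * c m j) • Amat := by
        rw [Pi.smul_apply, hVj, smul_smul]
      rw [hr] at hm
      have := smul_Amat_inj hm
      linarith
    have hzero : ∀ m n, m ≠ n → ∀ j, c m j = 0 ∨ c n j = 0 := by
      intro m n hmn j
      have hm := congrFun (h2 m n n (by tauto)).1 j
      rw [lie_apply_AYY r _ _ _ j (hVj m j) (hVj n j) (hVj n j)] at hm
      have h0 : c m j * c n j * c n j * 4 = 0 := smul_Amat_eq_zero hm
      have h0' : c m j * (c n j * c n j) = 0 := by linarith
      rcases mul_eq_zero.mp h0' with h | h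
      · exact Or.inl h
      · exact Or.inr (by nlinarith)
    refine ⟨fun m => Finset.univ.filter (fun i => c m i ≠ 0), c, ?_, ?_, ?_⟩
    · intro m n hmn
      rw [Finset.disjoint_left]
      intro i hi hni
      simp only [Finset.mem_filter, Finset.mem_univ, true_and] at hi hni
      rcases hzero m n hmn i with h | h
      · exact hi h
      · exact hni h
    · intro m i hi
      simp only [Finset.mem_filter, Finset.mem_univ, true_and] at hi
      have h3 := hcube m i
      have h' : (c m i - 1) * (c m i + 1) = 0 := by
        apply mul_left_cancel₀ hi
        nlinarith [h3]
      rcases mul_eq_zero.mp h' with h | h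
      · exact Or.inl (by linarith)
      · exact Or.inr (by linarith)
    · intro m
      rw [hcV m]
      symm
      apply Finset.sum_filter_of_ne
      intro x _ hfx h0
      exact hfx (by simp [h0])
  · rintro ⟨S, ε, hdisj, hsign, hform⟩
    have hVj : ∀ m j, V m j = (if j ∈ S m then ε m j else 0) • Amat := by
      intro m j
      rw [hform m, Finset.sum_apply]
      simp only [Pi.smul_apply, Hvec, Pi.single_apply, smul_ite, smul_zero]
      rw [Finset.sum_ite_eq]
      split <;> simp [Amat]
    have hc3 : ∀ m j, (if j ∈ S m then ε m j else 0) * (if j ∈ S m then ε m j else 0)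
        * (if j ∈ S m then ε m j else 0) = (if j ∈ S m then ε m j else 0) := by
      intro m j
      by_cases h : j ∈ S m
      · rcases hsign m j h with he | he <;> simp [h, he]
      · simp [h]
    have hdz : ∀ m n, m ≠ n → ∀ j,
        (if j ∈ S m then ε m j else 0) * (if j ∈ S n then ε n j else 0) = 0 := by
      intro m n hmn j
      by_cases h : j ∈ S m
      · have : j ∉ S n := Finset.disjoint_left.mp (hdisj m n hmn) h
        simp [this]
      · simp [h]
    constructor
    · intro m
      constructor
      · funext j
        rw [lie_apply_AYY r _ _ _ j (hVj m j) (hVj m j) (hVj m j),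
          Pi.smul_apply, hVj m j, smul_smul]
        congr 1
        linear_combination 4 * hc3 m j
      · funext j
        rw [lie_apply_AYA r _ _ _ j (hVj m j) (hVj m j) (hVj m j),
          Pi.neg_apply, Pi.smul_apply, Jmap_apply_of r (V m) j (hVj m j),
          smul_smul, ← neg_smul]
        congr 1
        linear_combination (-4) * hc3 m j
    · intro m n l hmnl
      have hprod : ∀ j, (if j ∈ S m then ε m j else 0) * (if j ∈ S n then ε n j else 0)
          * (if j ∈ S l then ε l j else 0) = 0 := by
        intro j
        by_cases hmn : m = n
        · subst hmn
          have hnl : m ≠ l := fun h => hmnl ⟨rfl, h⟩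
          linear_combination (if j ∈ S m then ε m j else 0) * hdz m l hnl j
        · linear_combination (if j ∈ S l then ε l j else 0) * hdz m n hmn j
      constructor
      · funext j
        rw [lie_apply_AYY r _ _ _ j (hVj m j) (hVj n j) (hVj l j), hprod j,
          zero_mul, zero_smul]
        simp
      · funext j
        rw [lie_apply_AYA r _ _ _ j (hVj m j) (hVj n j) (hVj l j), hprod j,
          zero_mul, zero_smul]
        simp
end

section
/- Let η : ℝ → ℝ be continuous with η(0) = 0, differentiable on (0,∞), and suppose that η'(x)·sinh(x)·cosh(x) = η(x) for all x > 0. Then there exists c ∈ ℝ such that η(x) = c·tanh(x) for all x ≥ 0. -/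
lemma my_hasDerivAt_tanh (x : ℝ) :
    HasDerivAt Real.tanh (1 / Real.cosh x ^ 2) x := by
  have h : Real.tanh = fun y => Real.sinh y / Real.cosh y :=
    funext fun y => Real.tanh_eq_sinh_div_cosh y
  rw [h]
  have hd := (Real.hasDerivAt_sinh x).div (Real.hasDerivAt_cosh x) (Real.cosh_pos x).ne'
  refine hd.congr_deriv ?_
  have hc := Real.cosh_sq_sub_sinh_sq x
  field_simp
  nlinarith [hc]

/-- If `η : ℝ → ℝ` is continuous with `η 0 = 0`, differentiable on `(0, ∞)`, and
satisfies `η'(x) · sinh x · cosh x = η x` for all `x > 0`, then `η` is a constant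
multiple of `tanh` on `[0, ∞)`. -/
theorem eq_const_mul_tanh_of_ode (η : ℝ → ℝ) (hcont : Continuous η) (h0 : η 0 = 0)
    (hdiff : ∀ x : ℝ, 0 < x → DifferentiableAt ℝ η x)
    (hode : ∀ x : ℝ, 0 < x → deriv η x * Real.sinh x * Real.cosh x = η x) :
    ∃ c : ℝ, ∀ x : ℝ, 0 ≤ x → η x = c * Real.tanh x := by
  set g : ℝ → ℝ := fun x => η x / Real.tanh x with hg_def
  have htanh_pos : ∀ x : ℝ, 0 < x → 0 < Real.tanh x := by
    intro x hx
    rw [Real.tanh_eq_sinh_div_cosh]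
    exact div_pos (Real.sinh_pos_iff.2 hx) (Real.cosh_pos x)
  have hg : ∀ x : ℝ, 0 < x → HasDerivAt g 0 x := by
    intro x hx
    have hηd := (hdiff x hx).hasDerivAt
    have hd := hηd.div (my_hasDerivAt_tanh x) (htanh_pos x hx).ne'
    refine hd.congr_deriv ?_
    have hode' := hode x hx
    have hs := (Real.sinh_pos_iff.2 hx).ne'
    have hc := (Real.cosh_pos x).ne'
    rw [Real.tanh_eq_sinh_div_cosh]
    field_simp
    linear_combination hode'
  have hconst : ∀ x : ℝ, 0 < x → g x = g 1 := by
    intro x hx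
    have hdo : DifferentiableOn ℝ g (Set.Ioi (0:ℝ)) := fun y hy =>
      ((hg y hy).differentiableAt).differentiableWithinAt
    refine (convex_Ioi (0:ℝ)).is_const_of_fderivWithin_eq_zero hdo ?_ hx (by norm_num)
    intro y hy
    rw [fderivWithin_of_isOpen isOpen_Ioi hy]
    exact ((hg y hy).hasFDerivAt).fderiv.trans (by ext; simp)
  refine ⟨g 1, fun x hx => ?_⟩
  rcases eq_or_lt_of_le hx with h | h
  · simp [← h, h0]
  · have := hconst x h
    rw [hg_def] at this
    field_simp [(htanh_pos x h).ne'] at this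
    rw [this]; ring
end

section
/- Let η : ℝ → ℝ be a differentiable odd function, and define F on the open unit disc D = {w ∈ ℂ : |w| < 1} by F(0) = 0 and F(w) = η(artanh|w|)·w/|w| for w ≠ 0, where artanh is the inverse hyperbolic tangent. Then F is real differentiable at every point of D with det(DF(w)) = (1 − |w|²)^{−2} for all w ∈ D (DF(w) denoting the Fréchet derivative of F at w as an ℝ-linear endomorphism of ℂ ≅ ℝ²) if and only if η = sinh or η = −sinh. -/
/-- The inverse hyperbolic tangent (not available in Mathlib). -/
noncomputable def Real.artanh' (x : ℝ) : ℝ := Real.log ((1 + x) / (1 - x)) / 2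

section Helpers

lemma artanh_tanh' (a : ℝ) : Real.artanh' (Real.tanh a) = a := by
  have hc : 0 < Real.cosh a := Real.cosh_pos a
  have h1 : 1 + Real.tanh a = Real.exp a / Real.cosh a := by
    rw [Real.tanh_eq_sinh_div_cosh, ← Real.cosh_add_sinh]
    field_simp
  have h2 : 1 - Real.tanh a = Real.exp (-a) / Real.cosh a := by
    rw [Real.tanh_eq_sinh_div_cosh, ← Real.cosh_sub_sinh]
    field_simp
  have h3 : (1 + Real.tanh a) / (1 - Real.tanh a) = Real.exp (2 * a) := by
    rw [h1, h2]
    rw [div_div_div_cancel_right₀, ← Real.exp_sub]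
    · ring_nf
    · exact hc.ne'
  rw [Real.artanh', h3, Real.log_exp]
  ring

lemma sinh_artanh' {r : ℝ} (h0 : -1 < r) (h1 : r < 1) :
    Real.sinh (Real.artanh' r) = r / Real.sqrt (1 - r ^ 2) := by
  have hp : (0:ℝ) < 1 + r := by linarith
  have hq : (0:ℝ) < 1 - r := by linarith
  set A := Real.sqrt (1+r) with hAdef
  set B := Real.sqrt (1-r) with hBdef
  have hA : 0 < A := Real.sqrt_pos.2 hp
  have hB : 0 < B := Real.sqrt_pos.2 hq
  have hA2 : A ^ 2 = 1 + r := Real.sq_sqrt hp.le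
  have hB2 : B ^ 2 = 1 - r := Real.sq_sqrt hq.le
  have hx : Real.exp (Real.artanh' r) = A / B := by
    have h2 : (1+r)/(1-r) = Real.exp (Real.artanh' r) ^ 2 := by
      rw [Real.artanh', ← Real.exp_nat_mul]
      rw [show ((2:ℕ):ℝ) * (Real.log ((1 + r) / (1 - r)) / 2)
          = Real.log ((1+r)/(1-r)) by push_cast; ring]
      rw [Real.exp_log (by positivity)]
    have : Real.sqrt ((1+r)/(1-r)) = Real.exp (Real.artanh' r) := by
      rw [h2, Real.sqrt_sq (Real.exp_pos _).le]
    rw [← this, hAdef, hBdef, Real.sqrt_div hp.le]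
  have hAB : Real.sqrt (1 - r^2) = A * B := by
    rw [show (1:ℝ) - r^2 = (1+r)*(1-r) by ring, Real.sqrt_mul hp.le]
  rw [Real.sinh_eq, Real.exp_neg, hx, hAB]
  rw [inv_div]
  field_simp
  linear_combination hA2 - hB2

lemma hasDerivAt_artanh' {r : ℝ} (h0 : -1 < r) (h1 : r < 1) :
    HasDerivAt Real.artanh' ((1 - r ^ 2)⁻¹) r := by
  have hp : (0:ℝ) < 1 + r := by linarith
  have hq : (0:ℝ) < 1 - r := by linarith
  have hf : HasDerivAt (fun x : ℝ => (1 + x) / (1 - x))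
      ((1 * (1 - r) - (1 + r) * (-1)) / (1 - r) ^ 2) r :=
    (((hasDerivAt_id r).const_add 1).div ((hasDerivAt_id r).const_sub 1) hq.ne')
  have hlog := (hf.log (by positivity)).div_const 2
  have : HasDerivAt (fun x : ℝ => Real.log ((1 + x) / (1 - x)) / 2)
      ((1 - r ^ 2)⁻¹) r := by
    refine hlog.congr_deriv ?_
    have h2 : (1:ℝ) - r^2 ≠ 0 := by nlinarith
    field_simp
    ring
  exact this

open Complex in
lemma hasFDerivAt_normSq' (w : ℂ) :
    HasFDerivAt Complex.normSq
      ((2 * w.re) • Complex.reCLM + (2 * w.im) • Complex.imCLM : ℂ →L[ℝ] ℝ) w := by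
  have hre : HasFDerivAt (fun z : ℂ => z.re) (Complex.reCLM : ℂ →L[ℝ] ℝ) w :=
    Complex.reCLM.hasFDerivAt
  have him : HasFDerivAt (fun z : ℂ => z.im) (Complex.imCLM : ℂ →L[ℝ] ℝ) w :=
    Complex.imCLM.hasFDerivAt
  have h := (hre.mul hre).add (him.mul him)
  have heq : Complex.normSq = fun z : ℂ => z.re * z.re + z.im * z.im := by
    funext z; exact Complex.normSq_apply z
  rw [heq]
  refine h.congr_fderiv ?_
  module

lemma normSq_val' (w : ℂ) :
    ((2 * w.re) • Complex.reCLM + (2 * w.im) • Complex.imCLM : ℂ →L[ℝ] ℝ) w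
      = 2 * Complex.normSq w := by
  simp [Complex.normSq_apply]
  ring

open Complex in
lemma det_lin_aux (a : ℝ) (L : ℂ →L[ℝ] ℝ) (b : ℂ) :
    (a • ContinuousLinearMap.id ℝ ℂ + L.smulRight b).det = a ^ 2 + a * L b := by
  rw [ContinuousLinearMap.det, ← LinearMap.det_toMatrix Complex.basisOneI,
    Matrix.det_fin_two]
  have hb : b = b.re • (1:ℂ) + b.im • I := by
    simp only [Complex.real_smul, smul_eq_mul, mul_one]
    exact (Complex.re_add_im b).symm
  have hLb : L b = b.re * L 1 + b.im * L I := by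
    conv_lhs => rw [hb]
    rw [map_add, map_smul, map_smul]
    simp
  rw [hLb]
  simp only [LinearMap.toMatrix_apply, Complex.coe_basisOneI, Complex.coe_basisOneI_repr]
  simp [Complex.real_smul]
  ring

lemma fderiv_det_scalar_mul (c : ℂ → ℝ) (L : ℂ →L[ℝ] ℝ) (w : ℂ) (hc : HasFDerivAt c L w)
    (F : ℂ → ℂ) (heq : F =ᶠ[nhds w] fun z => (c z : ℂ) * z) :
    DifferentiableAt ℝ F w ∧ (fderiv ℝ F w).det = c w ^ 2 + c w * L w := by
  have h1 : HasFDerivAt (fun z : ℂ => (c z : ℂ) * z)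
      (c w • ContinuousLinearMap.id ℝ ℂ + L.smulRight w) w := by
    have := hc.smul (hasFDerivAt_id w)
    exact this.congr_of_eventuallyEq (Filter.Eventually.of_forall fun z => by simp [Complex.real_smul])
  have h2 : HasFDerivAt F (c w • ContinuousLinearMap.id ℝ ℂ + L.smulRight w) w :=
    h1.congr_of_eventuallyEq heq
  refine ⟨h2.differentiableAt, ?_⟩
  rw [h2.fderiv]
  exact det_lin_aux _ _ _

lemma eta_eq_sinh_of_sq (η : ℝ → ℝ) (hodd : ∀ x, η (-x) = -η x) (hcont : Continuous η)
    (hsq : ∀ x, η x ^ 2 = Real.sinh x ^ 2) (h1 : 0 < η 1) : η = Real.sinh := by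
  have hpos : ∀ x : ℝ, 0 < x → 0 < η x := by
    intro x hx
    by_contra hle
    push_neg at hle
    have hxne : η x ≠ 0 := by
      intro h
      have h2 := hsq x
      rw [h] at h2
      have h3 : Real.sinh x = 0 := by nlinarith
      exact hx.ne' (Real.sinh_eq_zero.mp h3)
    have hlt : η x < 0 := lt_of_le_of_ne hle hxne
    obtain ⟨c, hc1, hc2⟩ := intermediate_value_uIcc (a := x) (b := 1)
      (hcont.continuousOn)
      (show (0:ℝ) ∈ Set.uIcc (η x) (η 1) from Set.mem_uIcc.2 (Or.inl ⟨hlt.le, h1.le⟩))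
    have hcpos : 0 < c := by
      rcases Set.mem_uIcc.1 hc1 with ⟨h, _⟩ | ⟨h, _⟩
      · exact lt_of_lt_of_le hx h
      · exact lt_of_lt_of_le one_pos h
    have : Real.sinh c = 0 := by
      have := hsq c
      rw [hc2] at this
      nlinarith
    exact hcpos.ne' (Real.sinh_eq_zero.mp this)
  funext x
  rcases lt_trichotomy x 0 with h | h | h
  · have hx' : 0 < -x := by linarith
    have := hpos _ hx'
    have h2 : η (-x) = Real.sinh (-x) := by
      have hs := Real.sinh_pos_iff.2 hx'
      have h0 : (η (-x) - Real.sinh (-x)) * (η (-x) + Real.sinh (-x)) = 0 := by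
        linear_combination hsq (-x)
      rcases mul_eq_zero.1 h0 with h' | h'
      · linarith
      · linarith
    have := hodd x
    rw [h2, Real.sinh_neg] at this
    linarith
  · have h0 : η 0 = 0 := by have := hodd 0; simp at this; linarith
    rw [h, h0, Real.sinh_zero]
  · have hp := hpos x h
    have hs := Real.sinh_pos_iff.2 h
    have h0 : (η x - Real.sinh x) * (η x + Real.sinh x) = 0 := by
      linear_combination hsq x
    rcases mul_eq_zero.1 h0 with h' | h'
    · linarith
    · linarith

end Helpers

set_option maxHeartbeats 1000000
lemma radial_aux_forward (η : ℝ → ℝ)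
    (hodd : ∀ x : ℝ, η (-x) = -η x) (hdiff : Differentiable ℝ η)
    (F : ℂ → ℂ) (hF0 : F 0 = 0)
    (hF : ∀ w : ℂ, w ≠ 0 → ‖w‖ < 1 →
      F w = (η (Real.artanh' ‖w‖) : ℂ) * w / ((‖w‖ : ℝ) : ℂ))
    (hyp : ∀ w : ℂ, ‖w‖ < 1 →
        DifferentiableAt ℝ F w ∧
          (fderiv ℝ F w).det = (1 - ‖w‖ ^ 2) ^ (-2 : ℤ)) :
    (η = Real.sinh ∨ η = fun x => -Real.sinh x) := by
  have hzero : η 0 = 0 := by have := hodd 0; simp at this; linarith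
  -- Step 1: key ODE relation for positive arguments
  have hkey : ∀ a : ℝ, 0 < a → η a * deriv η a = Real.sinh a * Real.cosh a := by
    intro a ha
    have hc := Real.cosh_pos a
    have hsi := Real.sinh_pos_iff.2 ha
    set r := Real.tanh a with hrdef
    have hr0 : 0 < r := by
      rw [hrdef, Real.tanh_eq_sinh_div_cosh]; positivity
    have hr1 : r < 1 := by
      rw [hrdef, Real.tanh_eq_sinh_div_cosh, div_lt_one hc]
      nlinarith [Real.cosh_sub_sinh a, Real.exp_pos (-a)]
    have h1r : (0:ℝ) < 1 - r ^ 2 := by nlinarith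
    set w : ℂ := (r : ℂ) with hwdef
    have habsw : ‖w‖ = r := by
      rw [hwdef, Complex.norm_real, Real.norm_eq_abs, abs_of_pos hr0]
    have hwlt : ‖w‖ < 1 := by rw [habsw]; exact hr1
    have hw0 : w ≠ 0 := by
      rw [hwdef]; exact_mod_cast hr0.ne'
    have ha' : Real.artanh' r = a := artanh_tanh' a
    have hns : Complex.normSq w = r ^ 2 := by
      rw [hwdef, Complex.normSq_ofReal]; ring
    -- derivative of the absolute value at w
    set N : ℂ →L[ℝ] ℝ := (2 * w.re) • Complex.reCLM + (2 * w.im) • Complex.imCLM with hNdef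
    have habsD : HasFDerivAt (fun z : ℂ => ‖z‖) ((1 / (2 * r)) • N) w := by
      have h0 := (Real.hasDerivAt_sqrt (x := Complex.normSq w)
        (by rw [hns]; positivity)).comp_hasFDerivAt w (hasFDerivAt_normSq' w)
      have hfun : ((fun x : ℝ => Real.sqrt x) ∘ ⇑Complex.normSq) = (fun z : ℂ => ‖z‖) := by
        funext z; simp [Complex.norm_def, Function.comp]
      rw [hfun, hns, Real.sqrt_sq hr0.le] at h0
      exact h0
    set D := deriv η a with hD
    have hq1 : HasDerivAt (fun ρ : ℝ => η (Real.artanh' ρ)) (D * (1 - r ^ 2)⁻¹) r := by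
      have h := HasDerivAt.comp r ((hdiff (Real.artanh' r)).hasDerivAt)
        (hasDerivAt_artanh' (by linarith) hr1)
      rw [ha'] at h
      exact h
    set m := (D * (1 - r ^ 2)⁻¹ * r - η (Real.artanh' r) * 1) / r ^ 2 with hm
    have hq : HasDerivAt (fun ρ : ℝ => η (Real.artanh' ρ) / ρ) m r :=
      hq1.div (hasDerivAt_id r) hr0.ne'
    rw [← habsw] at hq
    have hcD := hq.comp_hasFDerivAt w habsD
    have hcD' : HasFDerivAt (fun z : ℂ => η (Real.artanh' ‖z‖) / ‖z‖)
        (m • ((1 / (2 * r)) • N)) w := hcD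
    -- eventual equality
    have hev : F =ᶠ[nhds w] fun z =>
        ((η (Real.artanh' ‖z‖) / ‖z‖ : ℝ) : ℂ) * z := by
      have hopen : IsOpen {z : ℂ | ‖z‖ < 1 ∧ z ≠ 0} :=
        (isOpen_lt continuous_norm continuous_const).inter isOpen_compl_singleton
      filter_upwards [hopen.mem_nhds ⟨hwlt, hw0⟩] with z hz
      rw [hF z hz.2 hz.1]
      have habs0' : ((‖z‖ : ℝ) : ℂ) ≠ 0 := by
        exact_mod_cast (norm_ne_zero_iff.mpr hz.2)
      push_cast
      field_simp
    obtain ⟨hdF, hdet⟩ := fderiv_det_scalar_mul _ _ w hcD' F hev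
    have hdet2 := (hyp w hwlt).2
    rw [hdet] at hdet2
    -- evaluate everything
    have hval : (m • ((1 / (2 * r)) • N)) w = m * r := by
      have hNw : N w = 2 * Complex.normSq w := normSq_val' w
      rw [ContinuousLinearMap.smul_apply, ContinuousLinearMap.smul_apply, hNw, hns,
        smul_eq_mul, smul_eq_mul]
      field_simp
    rw [hval, habsw, ha'] at hdet2
    rw [zpow_neg, zpow_two] at hdet2
    -- hdet2 : (η a / r)^2 + η a / r * (m * r) = ((1-r^2)*(1-r^2))⁻¹
    have heD : η a * D = r * (1 - r ^ 2)⁻¹ := by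
      rw [hm, ha'] at hdet2
      field_simp at hdet2 ⊢
      have hcancel : r ^ 4 * (1 - r ^ 2) * (η a * D * (1 - r ^ 2) - r) = 0 := by
        linear_combination r ^ 3 * (1 - r ^ 2) * hdet2
      rcases mul_eq_zero.1 hcancel with h' | h'
      · exfalso
        have : r ^ 4 * (1 - r ^ 2) > 0 := by positivity
        linarith
      · linarith
    rw [heD]
    have hch : Real.cosh a ^ 2 - Real.sinh a ^ 2 = 1 := Real.cosh_sq_sub_sinh_sq a
    rw [hrdef, Real.tanh_eq_sinh_div_cosh]
    rw [show (1:ℝ) - (Real.sinh a / Real.cosh a) ^ 2 = (Real.cosh a ^ 2)⁻¹ by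
      field_simp; exact hch]
    field_simp
  -- Step 2: η x ^ 2 = sinh x ^ 2 for all x
  have hall : ∀ x : ℝ, η x * deriv η x = Real.sinh x * Real.cosh x := by
    intro x
    rcases lt_trichotomy x 0 with h | h | h
    · have hderiv : HasDerivAt η (deriv η (-x)) x := by
        have h1 : HasDerivAt (fun y : ℝ => η (-y)) (deriv η (-x) * (-1)) x :=
          HasDerivAt.comp x ((hdiff (-x)).hasDerivAt) (hasDerivAt_neg x)
        have h2 := h1.neg
        have hfun : (-fun y : ℝ => η (-y)) = η := funext fun y => by rw [Pi.neg_apply, hodd]; ring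
        rw [hfun] at h2
        exact h2.congr_deriv (by ring)
      rw [hderiv.deriv]
      have hx1 : η x = -η (-x) := by rw [hodd x]; ring
      rw [hx1]
      have hthis := hkey (-x) (by linarith)
      rw [show Real.sinh (-x) = -Real.sinh x from Real.sinh_neg x,
        show Real.cosh (-x) = Real.cosh x from Real.cosh_neg x] at hthis
      linear_combination -hthis
    · rw [h, hzero, Real.sinh_zero]; ring
    · exact hkey x h
  have hsq : ∀ x : ℝ, η x ^ 2 = Real.sinh x ^ 2 := by
    intro x
    set H := fun x : ℝ => η x ^ 2 - Real.sinh x ^ 2 with hH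
    have hHdiff : Differentiable ℝ H :=
      (hdiff.pow 2).sub (Real.differentiable_sinh.pow 2)
    have hH' : ∀ y : ℝ, deriv H y = 0 := by
      intro y
      have h1 : HasDerivAt H (2 * η y * deriv η y - 2 * Real.sinh y * Real.cosh y) y := by
        have h2 := (((hdiff y).hasDerivAt).pow 2).sub ((Real.hasDerivAt_sinh y).pow 2)
        refine h2.congr_deriv ?_
        push_cast
        norm_num
      rw [h1.deriv]
      linear_combination 2 * hall y
    have := is_const_of_deriv_eq_zero hHdiff hH' x 0
    rw [hH] at this
    simp only [Real.sinh_zero, hzero] at this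
    nlinarith [this]
  -- Step 3: sign analysis
  have h1ne : η 1 ≠ 0 := by
    intro h
    have := hsq 1
    rw [h] at this
    have : Real.sinh 1 = 0 := by nlinarith
    simpa using Real.sinh_eq_zero.mp this
  rcases lt_or_gt_of_ne h1ne with hneg | hpos
  · right
    have := eta_eq_sinh_of_sq (fun x => -η x) (fun x => by simp [hodd])
      (hdiff.neg.continuous) (fun x => by simpa using hsq x) (by simpa using hneg)
    funext x
    have hx := congrFun this x
    simp [← hx]
  · left
    exact eta_eq_sinh_of_sq η hodd hdiff.continuous hsq hpos

lemma radial_aux_backward (η : ℝ → ℝ)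
    (hodd : ∀ x : ℝ, η (-x) = -η x) (hdiff : Differentiable ℝ η)
    (F : ℂ → ℂ) (hF0 : F 0 = 0)
    (hF : ∀ w : ℂ, w ≠ 0 → ‖w‖ < 1 →
      F w = (η (Real.artanh' ‖w‖) : ℂ) * w / ((‖w‖ : ℝ) : ℂ))
    (hs : η = Real.sinh ∨ η = fun x => -Real.sinh x) :
    (∀ w : ℂ, ‖w‖ < 1 →
        DifferentiableAt ℝ F w ∧
          (fderiv ℝ F w).det = (1 - ‖w‖ ^ 2) ^ (-2 : ℤ)) := by
  obtain ⟨ε, hε2, hεeq⟩ : ∃ ε : ℝ, ε ^ 2 = 1 ∧ ∀ x, η x = ε * Real.sinh x := by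
    rcases hs with h | h
    · exact ⟨1, by norm_num, fun x => by rw [h]; ring⟩
    · exact ⟨-1, by norm_num, fun x => by rw [h]; ring⟩
  intro w hw
  set c : ℂ → ℝ := fun z => ε * (Real.sqrt (1 - Complex.normSq z))⁻¹ with hcdef
  set s := Complex.normSq w with hsdef
  have hs1 : s < 1 := by
    rw [hsdef, ← Complex.sq_norm]
    exact pow_lt_one₀ (norm_nonneg w) hw two_ne_zero
  have ht : (0:ℝ) < 1 - s := by linarith
  set u := Real.sqrt (1 - s) with hudef
  have hu : 0 < u := Real.sqrt_pos.2 ht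
  have hu2 : u ^ 2 = 1 - s := Real.sq_sqrt ht.le
  -- derivative of c
  set N : ℂ →L[ℝ] ℝ := (2 * w.re) • Complex.reCLM + (2 * w.im) • Complex.imCLM with hNdef
  have hg : HasFDerivAt (fun z : ℂ => 1 - Complex.normSq z) (-N) w :=
    (hasFDerivAt_normSq' w).const_sub 1
  have hmid : HasDerivAt (fun y : ℝ => (Real.sqrt y)⁻¹)
      (-(1 / (2 * u)) / u ^ 2) (1 - s) :=
    (Real.hasDerivAt_sqrt ht.ne').inv (by rw [← hudef]; exact hu.ne')
  have hcomp := hmid.comp_hasFDerivAt w hg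
  have hc : HasFDerivAt c (ε • ((-(1 / (2 * u)) / u ^ 2) • (-N))) w := hcomp.const_mul ε
  -- eventual equality
  have hev : F =ᶠ[nhds w] fun z => ((c z : ℝ) : ℂ) * z := by
    have hopen : IsOpen {z : ℂ | ‖z‖ < 1} :=
      isOpen_lt continuous_norm continuous_const
    filter_upwards [hopen.mem_nhds hw] with z hz
    by_cases hz0 : z = 0
    · simp [hz0, hF0]
    · rw [hF z hz0 hz]
      have habs0 : ‖z‖ ≠ 0 := norm_ne_zero_iff.mpr hz0
      have habs0' : ((‖z‖ : ℝ) : ℂ) ≠ 0 := by exact_mod_cast habs0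
      rw [hεeq, sinh_artanh' (by linarith [norm_nonneg z]) hz]
      have hβpos : 0 < Real.sqrt (1 - ‖z‖ ^ 2) := by
        apply Real.sqrt_pos.2
        have : ‖z‖ ^ 2 < 1 := pow_lt_one₀ (norm_nonneg z) hz two_ne_zero
        linarith
      have hβ0 : (Real.sqrt (1 - ‖z‖ ^ 2) : ℂ) ≠ 0 := by
        exact_mod_cast hβpos.ne'
      rw [hcdef]
      simp only [← Complex.sq_norm]
      push_cast
      field_simp
  obtain ⟨hdF, hdet⟩ := fderiv_det_scalar_mul c _ w hc F hev
  refine ⟨hdF, ?_⟩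
  rw [hdet]
  have hNw : N w = 2 * s := normSq_val' w
  have hval : (ε • ((-(1 / (2 * u)) / u ^ 2) • (-N))) w
      = ε * ((-(1 / (2 * u)) / u ^ 2) * (-(2 * s))) := by
    simp [ContinuousLinearMap.smul_apply, ContinuousLinearMap.neg_apply, hNw]
  rw [hval]
  have hcw : c w = ε * u⁻¹ := rfl
  rw [hcw]
  rw [show ‖w‖ ^ 2 = s from Complex.sq_norm w, zpow_neg, zpow_two]
  have h1s : (1:ℝ) - s ≠ 0 := ht.ne'
  have final : (ε * u⁻¹) ^ 2 + ε * u⁻¹ * (ε * (-(1 / (2 * u)) / u ^ 2 * -(2 * s))) = ((1-s)*(1-s))⁻¹ := by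
    rw [← hu2]
    field_simp
    linear_combination (u^2 + s)*hε2 + hu2
  rw [final]


/-- Let `η : ℝ → ℝ` be a differentiable odd function and let `F` be defined on the open
unit disc by `F 0 = 0` and `F w = η (artanh |w|) · w / |w|` for `w ≠ 0`.  Then `F` is
real differentiable at every point of the disc with Jacobian determinant
`det (DF(w)) = (1 - |w|²)⁻²` iff `η = sinh` or `η = -sinh`. -/
theorem radial_map_symplectic_iff_sinh (η : ℝ → ℝ)
    (hodd : ∀ x : ℝ, η (-x) = -η x) (hdiff : Differentiable ℝ η)
    (F : ℂ → ℂ) (hF0 : F 0 = 0)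
    (hF : ∀ w : ℂ, w ≠ 0 → ‖w‖ < 1 →
      F w = (η (Real.artanh' ‖w‖) : ℂ) * w / ((‖w‖ : ℝ) : ℂ)) :
    (∀ w : ℂ, ‖w‖ < 1 →
        DifferentiableAt ℝ F w ∧
          (fderiv ℝ F w).det = (1 - ‖w‖ ^ 2) ^ (-2 : ℤ)) ↔
      (η = Real.sinh ∨ η = fun x => -Real.sinh x) :=
  ⟨fun hyp => radial_aux_forward η hodd hdiff F hF0 hF hyp,
   fun hs => radial_aux_backward η hodd hdiff F hF0 hF hs⟩
end

section
/- Define f on the open unit disc by f(w) = w / √(1 − |w|²) for w ∈ ℂ with |w| < 1. Then for every w with |w| < 1, f is real differentiable at w and the determinant of its Fréchet derivative at w, viewed as an ℝ-linear endomorphism of ℂ ≅ ℝ², equals (1 − |w|²)^{−2}. -/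
lemma clm_det_eq (L : ℂ →L[ℝ] ℂ) :
    L.det = (L 1).re * (L Complex.I).im - (L Complex.I).re * (L 1).im := by
  rw [ContinuousLinearMap.det, ← LinearMap.det_toMatrix Complex.basisOneI,
    Matrix.det_fin_two]
  simp [LinearMap.toMatrix_apply]

set_option maxHeartbeats 2000000 in
/-- The map `f w = w / √(1 - |w|²)` of the open unit disc is real differentiable at
every point `w` of the disc, and the determinant of its Fréchet derivative at `w`
(an `ℝ`-linear endomorphism of `ℂ ≅ ℝ²`) equals `(1 - |w|²)⁻²`. -/
theorem symplectic_duality_disc_jacobian (w : ℂ) (hw : ‖w‖ < 1) :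
    DifferentiableAt ℝ
        (fun z : ℂ => z / (Real.sqrt (1 - ‖z‖ ^ 2) : ℂ)) w ∧
      (fderiv ℝ (fun z : ℂ => z / (Real.sqrt (1 - ‖z‖ ^ 2) : ℂ)) w).det =
        (1 - ‖w‖ ^ 2) ^ (-2 : ℤ) := by
  have hr : (0:ℝ) < 1 - ‖w‖ ^ 2 := by
    nlinarith [norm_nonneg w]
  set a := w.re with ha
  set b := w.im with hb
  have hg : HasFDerivAt (fun z : ℂ => 1 - ‖z‖ ^ 2)
      (-((a • Complex.reCLM + a • Complex.reCLM) + (b • Complex.imCLM + b • Complex.imCLM))) w := by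
    have h1 : HasFDerivAt (fun z : ℂ => z.re * z.re + z.im * z.im)
        ((a • Complex.reCLM + a • Complex.reCLM) + (b • Complex.imCLM + b • Complex.imCLM)) w :=
      (Complex.reCLM.hasFDerivAt.mul Complex.reCLM.hasFDerivAt).add
        (Complex.imCLM.hasFDerivAt.mul Complex.imCLM.hasFDerivAt)
    have heq : (fun z : ℂ => 1 - ‖z‖ ^ 2)
        = fun z : ℂ => 1 - (z.re * z.re + z.im * z.im) := by
      funext z
      rw [Complex.sq_norm, Complex.normSq_apply]
    rw [heq]
    simpa [Pi.sub_def] using (hasFDerivAt_const (1:ℝ) w).sub h1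
  set s : ℝ := Real.sqrt (1 - ‖w‖ ^ 2) with hs
  have hspos : 0 < s := Real.sqrt_pos.mpr hr
  set G : ℂ →L[ℝ] ℝ := (1 / (2 * s)) •
    (-((a • Complex.reCLM + a • Complex.reCLM) + (b • Complex.imCLM + b • Complex.imCLM))) with hG
  have hsq : HasFDerivAt (fun z : ℂ => Real.sqrt (1 - ‖z‖ ^ 2)) G w := hg.sqrt hr.ne'
  have hd : HasFDerivAt (fun z : ℂ => ((Real.sqrt (1 - ‖z‖ ^ 2) : ℝ) : ℂ))
      (Complex.ofRealCLM.comp G) w := Complex.ofRealCLM.hasFDerivAt.comp w hsq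
  have hdw : ((s : ℂ)) ≠ 0 := Complex.ofReal_ne_zero.mpr hspos.ne'
  have hinv : HasFDerivAt (fun z : ℂ => ((Real.sqrt (1 - ‖z‖ ^ 2) : ℝ) : ℂ)⁻¹)
      ((-ContinuousLinearMap.mulLeftRight ℝ ℂ ((s:ℂ))⁻¹ ((s:ℂ))⁻¹).comp
        (Complex.ofRealCLM.comp G)) w :=
    (hasFDerivAt_inv' hdw).comp w hd
  set L : ℂ →L[ℝ] ℂ :=
    w • ((-ContinuousLinearMap.mulLeftRight ℝ ℂ ((s:ℂ))⁻¹ ((s:ℂ))⁻¹).comp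
        (Complex.ofRealCLM.comp G)) + ((s:ℂ))⁻¹ • ContinuousLinearMap.id ℝ ℂ with hL
  have hf : HasFDerivAt (fun z : ℂ => z / (Real.sqrt (1 - ‖z‖ ^ 2) : ℂ)) L w := by
    simpa only [div_eq_mul_inv, Pi.mul_def, id_eq, ← hs] using (hasFDerivAt_id w).mul hinv
  refine ⟨hf.differentiableAt, ?_⟩
  rw [hf.fderiv, clm_det_eq]
  have hs2 : s ^ 2 = 1 - ‖w‖ ^ 2 := Real.sq_sqrt hr.le
  have habs : ‖w‖ ^ 2 = a ^ 2 + b ^ 2 := by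
    rw [Complex.sq_norm, Complex.normSq_apply]; ring
  have hL1 : L 1 = (↑s)⁻¹ + w * (-((↑s)⁻¹ * (↑(1 / (2 * s) * -(a + a)) : ℂ) * (↑s)⁻¹)) := by
    simp [hL, hG, ContinuousLinearMap.mulLeftRight_apply, smul_eq_mul]
    ring
  have hLI : L Complex.I =
      (↑s)⁻¹ * Complex.I + w * (-((↑s)⁻¹ * (↑(1 / (2 * s) * -(b + b)) : ℂ) * (↑s)⁻¹)) := by
    simp [hL, hG, ContinuousLinearMap.mulLeftRight_apply, smul_eq_mul]
    ring
  rw [hL1, hLI, zpow_neg, zpow_two, ← hs2]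
  have hsne : s ≠ 0 := hspos.ne'
  simp only [Complex.add_re, Complex.add_im, Complex.mul_re, Complex.mul_im,
    Complex.neg_re, Complex.neg_im, Complex.inv_re, Complex.inv_im,
    Complex.ofReal_re, Complex.ofReal_im, Complex.I_re, Complex.I_im,
    Complex.normSq_ofReal, Complex.mul_im, Complex.mul_re, ← ha, ← hb]
  have key : a ^ 2 + b ^ 2 = 1 - s ^ 2 := by
    rw [hs2, habs]; ring
  clear_value s a b
  field_simp
  linear_combination (4 * s ^ 6 : ℝ) * key
end

section
/- Define g : ℂ → ℂ by g(w) = w / √(1 + |w|²). Then for every w ∈ ℂ, g is real differentiable at w and the determinant of its Fréchet derivative at w, viewed as an ℝ-linear endomorphism of ℂ ≅ ℝ², equals (1 + |w|²)^{−2}. -/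
open Complex

private lemma key_hasFDerivAt (w : ℂ) :
    HasFDerivAt (fun z : ℂ => z / (Real.sqrt (1 + ‖z‖ ^ 2) : ℂ))
      (((Real.sqrt (1 + ‖w‖ ^ 2))⁻¹ • ContinuousLinearMap.id ℝ ℂ) +
        (((-(1 / (2 * Real.sqrt (1 + ‖w‖ ^ 2)))
            / (Real.sqrt (1 + ‖w‖ ^ 2)) ^ 2) •
          ((2 * w.re) • Complex.reCLM + (2 * w.im) • Complex.imCLM)).smulRight w)) w := by
  have hu : (0:ℝ) < 1 + ‖w‖ ^ 2 := by positivity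
  -- derivative of z ↦ 1 + |z|^2
  have hq : HasFDerivAt (fun z : ℂ => 1 + ‖z‖ ^ 2)
      ((2 * w.re) • Complex.reCLM + (2 * w.im) • Complex.imCLM) w := by
    have : HasFDerivAt (fun z : ℂ => 1 + (z.re * z.re + z.im * z.im))
        ((2 * w.re) • Complex.reCLM + (2 * w.im) • Complex.imCLM) w := by
      have hre : HasFDerivAt (fun z : ℂ => z.re) Complex.reCLM w :=
        Complex.reCLM.hasFDerivAt
      have him : HasFDerivAt (fun z : ℂ => z.im) Complex.imCLM w :=
        Complex.imCLM.hasFDerivAt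
      have := (hasFDerivAt_const (1:ℝ) w).add ((hre.mul hre).add (him.mul him))
      refine this.congr_fderiv ?_
      ext v
      simp
      ring
    convert this using 2 with z
    rw [Complex.sq_norm, Complex.normSq_apply]
  -- derivative of t ↦ (√t)⁻¹ at u
  have hs : HasDerivAt (fun t : ℝ => (Real.sqrt t)⁻¹)
      (-(1 / (2 * Real.sqrt (1 + ‖w‖ ^ 2)))
        / (Real.sqrt (1 + ‖w‖ ^ 2)) ^ 2) (1 + ‖w‖ ^ 2) := by
    exact (Real.hasDerivAt_sqrt hu.ne').inv (Real.sqrt_ne_zero'.2 hu)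
  have hc := (hs.comp_hasFDerivAt w hq)
  have := hc.smul (hasFDerivAt_id w)
  refine (this.congr_fderiv rfl).congr_of_eventuallyEq (Filter.Eventually.of_forall fun z => ?_)
  · simp [Function.comp, Complex.real_smul, div_eq_mul_inv, Complex.ofReal_inv, mul_comm]

/-- The map `g w = w / √(1 + |w|²)` is real differentiable at every point `w ∈ ℂ`, and
the determinant of its Fréchet derivative at `w` (an `ℝ`-linear endomorphism of
`ℂ ≅ ℝ²`) equals `(1 + |w|²)⁻²`. -/
theorem dual_symplectic_jacobian (w : ℂ) :
    DifferentiableAt ℝ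
        (fun z : ℂ => z / (Real.sqrt (1 + ‖z‖ ^ 2) : ℂ)) w ∧
      (fderiv ℝ (fun z : ℂ => z / (Real.sqrt (1 + ‖z‖ ^ 2) : ℂ)) w).det =
        (1 + ‖w‖ ^ 2) ^ (-2 : ℤ) := by
  have h := key_hasFDerivAt w
  refine ⟨h.differentiableAt, ?_⟩
  rw [h.fderiv]
  have hu : (0:ℝ) < 1 + ‖w‖ ^ 2 := by positivity
  set s : ℝ := Real.sqrt (1 + ‖w‖ ^ 2) with hs
  have hspos : 0 < s := Real.sqrt_pos.2 hu
  have hs2 : s ^ 2 = 1 + ‖w‖ ^ 2 := Real.sq_sqrt hu.le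
  clear_value s
  set L := ((s⁻¹ • ContinuousLinearMap.id ℝ ℂ) +
        (((-(1 / (2 * s)) / s ^ 2) •
          ((2 * w.re) • Complex.reCLM + (2 * w.im) • Complex.imCLM)).smulRight w))
  have hdet : L.det = LinearMap.det (L : ℂ →ₗ[ℝ] ℂ) := rfl
  rw [hdet, ← LinearMap.det_toMatrix Complex.basisOneI, Matrix.det_fin_two]
  have e0 : (Complex.basisOneI : Fin 2 → ℂ) 0 = 1 := by simp [Complex.coe_basisOneI]
  have e1 : (Complex.basisOneI : Fin 2 → ℂ) 1 = I := by simp [Complex.coe_basisOneI]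
  have hij : ∀ i j, LinearMap.toMatrix Complex.basisOneI Complex.basisOneI
      (L : ℂ →ₗ[ℝ] ℂ) i j = (Complex.basisOneI.repr (L (Complex.basisOneI j))) i := by
    intro i j; rw [LinearMap.toMatrix_apply]; rfl
  rw [hij, hij, hij, hij, e0, e1]
  have hL1 : L 1 = s⁻¹ • (1:ℂ) + ((-(1 / (2 * s)) / s ^ 2) * (2 * w.re)) • w := by
    simp [L, mul_comm]
  have hLI : L I = s⁻¹ • (I:ℂ) + ((-(1 / (2 * s)) / s ^ 2) * (2 * w.im)) • w := by
    simp [L, mul_comm]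
  rw [hL1, hLI]
  simp only [map_add, Finsupp.coe_add, Pi.add_apply, Complex.coe_basisOneI_repr,
    Matrix.cons_val_zero, Matrix.cons_val_one, Matrix.head_cons, Complex.add_re, Complex.add_im,
    Complex.smul_re, Complex.smul_im, Complex.one_re, Complex.one_im, Complex.I_re, Complex.I_im,
    smul_eq_mul]
  have habs : ‖w‖ ^ 2 = w.re ^ 2 + w.im ^ 2 := by
    rw [Complex.sq_norm, Complex.normSq_apply]; ring
  have hsne : s ≠ 0 := hspos.ne'
  have hr : w.re ^ 2 + w.im ^ 2 = s ^ 2 - 1 := by rw [hs2, habs]; ring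
  have step : (s⁻¹ * 1 + -(1 / (2 * s)) / s ^ 2 * (2 * w.re) * w.re) *
        (s⁻¹ * 1 + -(1 / (2 * s)) / s ^ 2 * (2 * w.im) * w.im) -
      (s⁻¹ * 0 + -(1 / (2 * s)) / s ^ 2 * (2 * w.im) * w.re) *
        (s⁻¹ * 0 + -(1 / (2 * s)) / s ^ 2 * (2 * w.re) * w.im) =
      s⁻¹ * s⁻¹ - (w.re ^ 2 + w.im ^ 2) / s ^ 4 := by
    field_simp
    ring
  have hrhs : (1 + ‖w‖ ^ 2) ^ (-2 : ℤ) = (s ^ 4)⁻¹ := by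
    rw [← hs2, zpow_neg]
    congr 1
    rw [show ((2:ℤ)) = ((2:ℕ):ℤ) from rfl, zpow_natCast]
    ring
  rw [step, hr, hrhs]
  field_simp
  ring
end
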